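/- If \mathbb{E}[\tau_0^a] < \infty, then there exists C > 0 such that almost surely, for all n large enough, \lambda_n \le (C/n^2) \cdot n^d / \sum_{x \in B_{n/2}} \tau_x. One may take any C > 2^{3d/2-2} d \pi^2 \mathbb{E}[\tau_0^a]^2. -/

import Mathlib

open Classical MeasureTheory ProbabilityTheory Filter
open Topology

noncomputable section

/-- Nearest-neighbour adjacency on `ℤ^d` (ℓ¹ distance one). -/
def Adj {d : ℕ} (x y : Fin d → ℤ) : Prop := (∑ i, |x i - y i|) = 1

/-- The box `B_n = {-n,…,n}^d` as a set. -/
def boxS (d n : ℕ) : Set (Fin d → ℤ) := {x | ∀ i, |x i| ≤ (n : ℤ)}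

/-- The box `B_n = {-n,…,n}^d` as a finset. -/
def boxF (d n : ℕ) : Finset (Fin d → ℤ) :=
  Finset.Icc (fun _ => -(n : ℤ)) (fun _ => (n : ℤ))

/-- Dirichlet form `ℰ(f,f) = (1/2) ∑_{x∼y} τ_x^a τ_y^a (f(y)-f(x))²`. -/
def dirForm {d : ℕ} (a : ℝ) (τ : (Fin d → ℤ) → ℝ) (f : (Fin d → ℤ) → ℝ) : ℝ :=
  (1/2) * ∑ᶠ p : (Fin d → ℤ) × (Fin d → ℤ),
    if Adj p.1 p.2 then τ p.1 ^ a * τ p.2 ^ a * (f p.2 - f p.1)^2 else 0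

/-- Principal Dirichlet eigenvalue on `B_n`. -/
def eig (d : ℕ) (a : ℝ) (τ : (Fin d → ℤ) → ℝ) (n : ℕ) : ℝ :=
  sInf {r | ∃ f : (Fin d → ℤ) → ℝ,
    (∀ x ∉ boxS d n, f x = 0) ∧ f ≠ 0 ∧
    r = dirForm a τ f / ∑ᶠ x, f x ^ 2 * τ x}

namespace ERUB

variable {d : ℕ}

/-- sup norm -/
def nrm (x : Fin d → ℤ) : ℕ := Finset.univ.sup fun i => (x i).natAbs

lemma nrm_le_iff {x : Fin d → ℤ} {n : ℕ} : nrm x ≤ n ↔ ∀ i, |x i| ≤ (n : ℤ) := by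
  rw [nrm, Finset.sup_le_iff]
  simp only [Int.abs_eq_natAbs]
  constructor
  · intro h i
    have := h i (Finset.mem_univ i)
    omega
  · intro h i _
    have := h i
    omega

lemma mem_boxF {x : Fin d → ℤ} {n : ℕ} : x ∈ boxF d n ↔ nrm x ≤ n := by
  rw [boxF, Finset.mem_Icc, nrm_le_iff]
  simp only [Int.abs_eq_natAbs, Pi.le_def]
  constructor
  · rintro ⟨h1, h2⟩ i
    have := h1 i; have := h2 i
    omega
  · intro h
    constructor <;> intro i <;> (have := h i; omega)

lemma mem_boxS {x : Fin d → ℤ} {n : ℕ} : x ∈ boxS d n ↔ nrm x ≤ n := by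
  rw [boxS, Set.mem_setOf_eq, nrm_le_iff]

lemma boxF_mono {m n : ℕ} (h : m ≤ n) : boxF d m ⊆ boxF d n := by
  intro x hx
  rw [mem_boxF] at *
  omega

lemma card_boxF (n : ℕ) : (boxF d n).card = (2 * n + 1) ^ d := by
  rw [boxF, Pi.card_Icc]
  have : ∀ _i : Fin d, (Finset.Icc (-(n:ℤ)) n).card = 2 * n + 1 := by
    intro i
    rw [Int.card_Icc]
    omega
  rw [Finset.prod_congr rfl (fun i _ => this i)]
  simp

/-- encoding injection -/
def encF : (Fin d → ℤ) → ℕ := Encodable.encode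

lemma encF_inj : Function.Injective (encF (d := d)) := Encodable.encode_injective

/-- max of encF over box r -/
def MM (d r : ℕ) : ℕ := (boxF d r).sup encF

lemma MM_mono {r s : ℕ} (h : r ≤ s) : MM d r ≤ MM d s :=
  Finset.sup_mono (boxF_mono h)

lemma encF_le_MM {x : Fin d → ℤ} : encF x ≤ MM d (nrm x) :=
  Finset.le_sup (mem_boxF.2 le_rfl)

/-- cumulative offsets -/
def TT (d r : ℕ) : ℕ := ∑ s ∈ Finset.range (r + 1), (MM d s + 1)

lemma TT_succ (r : ℕ) : TT d (r + 1) = TT d r + (MM d (r + 1) + 1) := by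
  rw [TT, Finset.sum_range_succ]; rfl

lemma TT_mono {r s : ℕ} (h : r ≤ s) : TT d r ≤ TT d s := by
  apply Finset.sum_le_sum_of_subset
  exact Finset.range_subset_range.2 (by omega)

/-- shell-monotone injection into ℕ -/
def psi (x : Fin d → ℤ) : ℕ := encF x + TT d (nrm x)

/-- threshold for box k -/
def thr (d k : ℕ) : ℕ := TT d k + MM d k + 1

lemma psi_lt_thr_iff {x : Fin d → ℤ} {k : ℕ} : psi x < thr d k ↔ nrm x ≤ k := by
  constructor
  · intro h
    by_contra hc
    push_neg at hc
    have h1 : TT d (k + 1) ≤ TT d (nrm x) := TT_mono (by omega)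
    have h2 := TT_succ (d := d) k
    have h3 : MM d k ≤ MM d (k + 1) := MM_mono (by omega)
    rw [psi, thr] at *
    omega
  · intro h
    have h1 : encF x ≤ MM d k := le_trans encF_le_MM (MM_mono h)
    have h2 : TT d (nrm x) ≤ TT d k := TT_mono h
    rw [psi, thr]
    omega

lemma psi_inj : Function.Injective (psi (d := d)) := by
  intro x y h
  have hn : nrm x = nrm y := by
    by_contra hc
    rcases Nat.lt_or_ge (nrm x) (nrm y) with hlt | hge
    · have := (psi_lt_thr_iff (x := x) (k := nrm x)).2 le_rfl
      have h2 : ¬ (psi y < thr d (nrm x)) := by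
        rw [psi_lt_thr_iff]; omega
      omega
    · have hlt : nrm y < nrm x := by omega
      have := (psi_lt_thr_iff (x := y) (k := nrm y)).2 le_rfl
      have h2 : ¬ (psi x < thr d (nrm y)) := by
        rw [psi_lt_thr_iff]; omega
      omega
  rw [psi, psi, hn] at h
  exact encF_inj (by omega)

end ERUB

namespace ERUB

variable {d : ℕ} {Ω : Type*} [MeasurableSpace Ω]

/-- SLLN over boxes for a family indexed by `ℤ^d`, restricted to an infinite class `S`. -/
lemma slln_over_boxes (P : Measure Ω) [IsProbabilityMeasure P]
    (Y : (Fin d → ℤ) → Ω → ℝ) (S : Set (Fin d → ℤ)) [DecidablePred (· ∈ S)]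
    (hSinf : S.Infinite) (μval : ℝ)
    (hYint : ∀ x ∈ S, Integrable (Y x) P)
    (hYavg : ∀ x ∈ S, ∫ ω, Y x ω ∂P = μval)
    (hYident : ∀ x ∈ S, ∀ y ∈ S, IdentDistrib (Y x) (Y y) P P)
    (hYindep : ∀ x ∈ S, ∀ y ∈ S, x ≠ y → IndepFun (Y x) (Y y) P) :
    ∀ᵐ ω ∂P, Tendsto
      (fun k : ℕ => (∑ x ∈ (boxF d k).filter (· ∈ S), Y x ω)
        / (((boxF d k).filter (· ∈ S)).card : ℝ)) atTop (𝓝 μval) := by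
  classical
  -- the ℕ-predicate corresponding to S through psi
  set q : ℕ → Prop := fun j => ∃ x ∈ S, psi x = j with hq
  have hqinf : (setOf q).Infinite := by
    have : setOf q = psi '' S := by
      ext j
      constructor
      · rintro ⟨x, hx, rfl⟩; exact ⟨x, hx, rfl⟩
      · rintro ⟨x, hx, rfl⟩; exact ⟨x, hx, rfl⟩
    rw [this]
    exact hSinf.image (Set.injOn_of_injective psi_inj)
  have hqex : ∀ j : ℕ, ∃ x, x ∈ S ∧ psi x = Nat.nth q j := by
    intro j
    have := Nat.nth_mem_of_infinite hqinf j
    exact this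
  -- enumeration of S
  set φ : ℕ → (Fin d → ℤ) := fun j => Classical.choose (hqex j) with hφ
  have hφS : ∀ j, φ j ∈ S := fun j => (Classical.choose_spec (hqex j)).1
  have hφψ : ∀ j, psi (φ j) = Nat.nth q j := fun j => (Classical.choose_spec (hqex j)).2
  have hφinj : Function.Injective φ := by
    intro j j' h
    have := hφψ j; rw [h, hφψ j'] at this
    exact (Nat.nth_injective hqinf this).symm
  -- the box-filter is the image of an initial segment
  have hkey : ∀ k : ℕ, (boxF d k).filter (· ∈ S)
      = (Finset.range (Nat.count q (thr d k))).image φ := by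
    intro k
    ext x
    simp only [Finset.mem_filter, Finset.mem_image, Finset.mem_range]
    constructor
    · rintro ⟨hbox, hxS⟩
      refine ⟨Nat.count q (psi x), ?_, ?_⟩
      · have hpsix : q (psi x) := ⟨x, hxS, rfl⟩
        have h1 : psi x < thr d k := psi_lt_thr_iff.2 (mem_boxF.1 hbox)
        have h2 : Nat.count q (psi x + 1) ≤ Nat.count q (thr d k) :=
          Nat.count_monotone q (by omega)
        rw [Nat.count_succ] at h2
        simp only [hpsix, if_true] at h2
        omega
      · have hpsix : q (psi x) := ⟨x, hxS, rfl⟩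
        have : Nat.nth q (Nat.count q (psi x)) = psi x := Nat.nth_count hpsix
        apply psi_inj
        rw [hφψ, this]
    · rintro ⟨j, hj, rfl⟩
      constructor
      · rw [mem_boxF, ← psi_lt_thr_iff, hφψ]
        exact Nat.nth_lt_of_lt_count hj
      · exact hφS j
  -- strong law for the enumerated sequence
  set X : ℕ → Ω → ℝ := fun j => Y (φ j) with hX
  have hSL := strong_law_ae_real X
    (hYint _ (hφS 0))
    (fun j j' hne => hYindep _ (hφS j) _ (hφS j') (fun h => hne (hφinj h)))
    (fun j => hYident _ (hφS j) _ (hφS 0))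
  rw [show P[X 0] = μval from hYavg _ (hφS 0)] at hSL
  -- the cardinality tends to infinity
  set c : ℕ → ℕ := fun k => ((boxF d k).filter (· ∈ S)).card with hc
  have hcmono : Monotone c := by
    intro k k' hk
    exact Finset.card_le_card (Finset.filter_subset_filter _ (boxF_mono hk))
  have hctop : Tendsto c atTop atTop := by
    apply tendsto_atTop_atTop.2
    intro K
    obtain ⟨F, hFS, hFcard⟩ := hSinf.exists_subset_card_eq K
    set k₀ : ℕ := F.sup nrm with hk₀
    refine ⟨k₀, fun k hk => ?_⟩
    have : F ⊆ (boxF d k).filter (· ∈ S) := by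
      intro x hx
      rw [Finset.mem_filter, mem_boxF]
      exact ⟨le_trans (Finset.le_sup hx) hk, hFS hx⟩
    calc K = F.card := hFcard.symm
    _ ≤ _ := Finset.card_le_card this
  -- conclude
  filter_upwards [hSL] with ω hω
  have : (fun k : ℕ => (∑ x ∈ (boxF d k).filter (· ∈ S), Y x ω) / (c k : ℝ))
      = (fun N : ℕ => (∑ j ∈ Finset.range N, X j ω) / (N : ℝ)) ∘ c := by
    funext k
    have hcard : c k = Nat.count q (thr d k) := by
      rw [hc]
      simp only [hkey k]
      rw [Finset.card_image_of_injective _ hφinj, Finset.card_range]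
    simp only [Function.comp_apply, hkey k, ← hcard]
    rw [Finset.sum_image (fun a _ b _ h => hφinj h)]
  rw [this]
  exact hω.comp hctop

end ERUB

namespace ERUB

variable {d : ℕ}

def shift (i : Fin d) (x : Fin d → ℤ) : Fin d → ℤ := Function.update x i (x i + 1)

lemma shift_apply (i : Fin d) (x : Fin d → ℤ) (j : Fin d) :
    shift i x j = if j = i then x i + 1 else x j := by
  rw [shift, Function.update_apply]

lemma shift_inj_base {i i' : Fin d} {x x' : Fin d → ℤ} (hx : x = x')
    (h : shift i x = shift i' x') : i = i' := by
  subst hx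
  by_contra hne
  have h1 := congrFun h i
  rw [shift_apply, shift_apply, if_pos rfl, if_neg (Ne.symm ?_)] at h1
  · omega
  · exact fun hc => hne (hc.symm ▸ rfl)

lemma adj_comm {x y : Fin d → ℤ} : Adj x y ↔ Adj y x := by
  unfold Adj
  rw [Finset.sum_congr rfl (fun i _ => abs_sub_comm (x i) (y i))]

lemma adj_iff {x y : Fin d → ℤ} :
    Adj x y ↔ ∃ i, y = shift i x ∨ x = shift i y := by
  constructor
  · intro h
    unfold Adj at h
    set c : Fin d → ℕ := fun i => (x i - y i).natAbs with hc
    have hsum : ∑ i, c i = 1 := by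
      have : ((∑ i, c i : ℕ) : ℤ) = 1 := by
        push_cast
        rw [← h]
        exact Finset.sum_congr rfl (fun i _ =>
          show ((x i - y i).natAbs : ℤ) = |x i - y i| from (Int.abs_eq_natAbs _).symm)
      exact_mod_cast this
    have hex : ∃ i, c i ≠ 0 := by
      by_contra hz
      push_neg at hz
      rw [Finset.sum_congr rfl (fun i _ => hz i), Finset.sum_const_zero] at hsum
      exact one_ne_zero hsum.symm
    obtain ⟨i, hi⟩ := hex
    have h1 : c i + ∑ j ∈ Finset.univ.erase i, c j = 1 := by
      rw [Finset.add_sum_erase _ c (Finset.mem_univ i)]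
      exact hsum
    have hci : c i = 1 := by omega
    have hrest : ∑ j ∈ Finset.univ.erase i, c j = 0 := by omega
    have hzero : ∀ j, j ≠ i → x j = y j := by
      intro j hj
      have := (Finset.sum_eq_zero_iff.1 hrest) j (Finset.mem_erase.2 ⟨hj, Finset.mem_univ j⟩)
      rw [hc] at this
      simp only at this
      omega
    have : x i = y i + 1 ∨ y i = x i + 1 := by
      rw [hc] at hci
      simp only at hci
      omega
    rcases this with hcase | hcase
    · exact ⟨i, Or.inr (funext fun j => by
        rw [shift_apply]
        by_cases hji : j = i
        · subst hji; rw [if_pos rfl]; omega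
        · rw [if_neg hji]; exact hzero j hji)⟩
    · exact ⟨i, Or.inl (funext fun j => by
        rw [shift_apply]
        by_cases hji : j = i
        · subst hji; rw [if_pos rfl]; omega
        · rw [if_neg hji]; exact (hzero j hji).symm)⟩
  · rintro ⟨i, hcase | hcase⟩
    · subst hcase
      unfold Adj
      have hterm : ∀ j : Fin d, |x j - shift i x j| = if j = i then 1 else 0 := by
        intro j
        rw [shift_apply]
        by_cases hji : j = i
        · simp [hji]
        · simp [hji]
      rw [Finset.sum_congr rfl (fun j _ => hterm j)]
      simp
    · subst hcase
      unfold Adj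
      have hterm : ∀ j : Fin d, |shift i y j - y j| = if j = i then 1 else 0 := by
        intro j
        rw [shift_apply]
        by_cases hji : j = i
        · simp [hji]
        · simp [hji]
      rw [Finset.sum_congr rfl (fun j _ => hterm j)]
      simp

lemma nrm_le_iff' {x : Fin d → ℤ} {n : ℕ} : nrm x ≤ n ↔ ∀ i, (x i).natAbs ≤ n := by
  rw [nrm, Finset.sup_le_iff]
  exact ⟨fun h i => h i (Finset.mem_univ i), fun h i _ => h i⟩

lemma nrm_shift_le (i : Fin d) (x : Fin d → ℤ) : nrm (shift i x) ≤ nrm x + 1 := by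
  rw [nrm_le_iff']
  intro j
  have h1 : (x j).natAbs ≤ nrm x := nrm_le_iff'.1 le_rfl j
  have h2 : (x i).natAbs ≤ nrm x := nrm_le_iff'.1 le_rfl i
  rw [shift_apply]
  by_cases hji : j = i
  · subst hji; rw [if_pos rfl]; omega
  · rw [if_neg hji]; omega

lemma le_nrm_shift (i : Fin d) (x : Fin d → ℤ) : nrm x ≤ nrm (shift i x) + 1 := by
  rw [nrm_le_iff']
  intro j
  have h1 : ((shift i x) j).natAbs ≤ nrm (shift i x) := nrm_le_iff'.1 le_rfl j
  have h2 : ((shift i x) i).natAbs ≤ nrm (shift i x) := nrm_le_iff'.1 le_rfl i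
  rw [shift_apply] at h1 h2
  rw [if_pos rfl] at h2
  by_cases hji : j = i
  · subst hji; omega
  · rw [if_neg hji] at h1; omega

lemma adj_nrm {x y : Fin d → ℤ} (h : Adj x y) : nrm y ≤ nrm x + 1 ∧ nrm x ≤ nrm y + 1 := by
  rcases adj_iff.1 h with ⟨i, rfl | rfl⟩
  · exact ⟨nrm_shift_le i x, le_nrm_shift i x⟩
  · exact ⟨le_nrm_shift i y, nrm_shift_le i y⟩

/-- plateau test function -/
def plat (n m : ℕ) (x : Fin d → ℤ) : ℝ :=
  max 0 (min 1 (((n : ℝ) - nrm x) / ((n : ℝ) - m)))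

lemma plat_nonneg (n m : ℕ) (x : Fin d → ℤ) : 0 ≤ plat n m x := le_max_left _ _

lemma plat_eq_one {n m : ℕ} (hmn : m < n) {x : Fin d → ℤ} (h : nrm x ≤ m) :
    plat n m x = 1 := by
  have hden : (0:ℝ) < (n:ℝ) - m := by
    have : (m:ℝ) < n := by exact_mod_cast hmn
    linarith
  have harg : (1:ℝ) ≤ ((n : ℝ) - nrm x) / ((n : ℝ) - m) := by
    rw [le_div_iff₀ hden]
    have : (nrm x : ℝ) ≤ m := by exact_mod_cast h
    linarith
  rw [plat, min_eq_left harg, max_eq_right zero_le_one]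

lemma plat_eq_zero {n m : ℕ} (hmn : m < n) {x : Fin d → ℤ} (h : n ≤ nrm x) :
    plat n m x = 0 := by
  have hden : (0:ℝ) < (n:ℝ) - m := by
    have : (m:ℝ) < n := by exact_mod_cast hmn
    linarith
  have harg : ((n : ℝ) - nrm x) / ((n : ℝ) - m) ≤ 0 := by
    apply div_nonpos_of_nonpos_of_nonneg
    · have : (n:ℝ) ≤ nrm x := by exact_mod_cast h
      linarith
    · linarith
  rw [plat, max_eq_left]
  exact le_trans (min_le_right _ _) harg

lemma plat_lip {n m : ℕ} (hmn : m < n) (x y : Fin d → ℤ) :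
    |plat n m y - plat n m x| ≤ |(nrm y : ℝ) - nrm x| / ((n : ℝ) - m) := by
  have hden : (0:ℝ) < (n:ℝ) - m := by
    have : (m:ℝ) < n := by exact_mod_cast hmn
    linarith
  set A : ℝ := ((n : ℝ) - nrm y) / ((n : ℝ) - m)
  set B : ℝ := ((n : ℝ) - nrm x) / ((n : ℝ) - m)
  have h1 : |plat n m y - plat n m x| ≤ |min 1 A - min 1 B| := by
    rw [plat, plat, max_comm 0 (min 1 A), max_comm 0 (min 1 B)]
    exact abs_max_sub_max_le_abs _ _ _
  have h2 : |min 1 A - min 1 B| ≤ |A - B| := by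
    have := abs_min_sub_min_le_max 1 A 1 B
    simpa using this
  have h4 : A - B = ((nrm x : ℝ) - nrm y) / ((n : ℝ) - m) := by
    rw [show A - B = (((n : ℝ) - nrm y) - ((n : ℝ) - nrm x)) / ((n : ℝ) - m) from
      div_sub_div_same _ _ _]
    congr 1
    ring
  have h3 : |A - B| = |(nrm y : ℝ) - nrm x| / ((n : ℝ) - m) := by
    rw [h4, abs_div, abs_of_pos hden, abs_sub_comm]
  calc |plat n m y - plat n m x| ≤ |min 1 A - min 1 B| := h1
    _ ≤ |A - B| := h2
    _ = _ := h3

end ERUB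

namespace ERUB

variable {d : ℕ}

lemma no_double_shift (i i' : Fin d) (x : Fin d → ℤ) : x ≠ shift i' (shift i x) := by
  intro hxx
  have h := congrFun hxx i'
  rw [shift_apply, if_pos rfl, shift_apply] at h
  by_cases hii : i' = i
  · rw [if_pos hii] at h; subst hii; omega
  · rw [if_neg hii] at h; omega

lemma dirForm_le_sum (n m : ℕ) (hm1 : 1 ≤ m) (hmn : m < n) (a : ℝ)
    (τω : (Fin d → ℤ) → ℝ) (hτ : ∀ x, 0 ≤ τω x) :
    dirForm a τω (plat n m) ≤ (((n:ℝ) - m)^2)⁻¹ *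
      ∑ i : Fin d, ∑ x ∈ boxF d n \ boxF d (m-1), τω x ^ a * τω (shift i x) ^ a := by
  classical
  set c : ℝ := (((n:ℝ) - m)^2)⁻¹ with hcdef
  have hden : (0:ℝ) < (n:ℝ) - m := by
    have : (m:ℝ) < n := by exact_mod_cast hmn
    linarith
  have hc0 : 0 ≤ c := by positivity
  set g : (Fin d → ℤ) × (Fin d → ℤ) → ℝ := fun p =>
    if Adj p.1 p.2 then τω p.1 ^ a * τω p.2 ^ a * (plat n m p.2 - plat n m p.1)^2 else 0
    with hgdef
  have hg0 : ∀ p, 0 ≤ g p := by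
    intro p
    rw [hgdef]
    dsimp only
    split_ifs
    · exact mul_nonneg (mul_nonneg (Real.rpow_nonneg (hτ _) _) (Real.rpow_nonneg (hτ _) _))
        (sq_nonneg _)
    · exact le_rfl
  have hgadj : ∀ p, ¬ Adj p.1 p.2 → g p = 0 := by
    intro p hp
    rw [hgdef]
    exact if_neg hp
  -- support inside the box product
  have hsupp : Function.support g ⊆ ↑(boxF d n ×ˢ boxF d n) := by
    intro p hp
    rw [Function.mem_support] at hp
    rw [Finset.coe_product, Set.mem_prod]
    by_contra hcon
    have hadj : Adj p.1 p.2 := by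
      by_contra hna
      exact hp (hgadj p hna)
    have hnrm := adj_nrm hadj
    have hzero : plat n m p.2 - plat n m p.1 = 0 := by
      rcases not_and_or.1 hcon with hcon1 | hcon1 <;>
        (simp only [Finset.mem_coe, mem_boxF, not_le] at hcon1)
      · rw [plat_eq_zero hmn (by omega), plat_eq_zero hmn (by omega), sub_zero]
      · rw [plat_eq_zero hmn (by omega), plat_eq_zero hmn (by omega), sub_zero]
    apply hp
    rw [hgdef]
    dsimp only
    rw [if_pos hadj, hzero]
    ring
  -- rewrite the finsum as a finite sum
  have hfs : dirForm a τω (plat n m) = (1/2) * ∑ p ∈ boxF d n ×ˢ boxF d n, g p := by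
    rw [dirForm]
    congr 1
    exact finsum_eq_sum_of_support_subset _ hsupp
  -- index set and parametrization of adjacent pairs
  set F : Fin d × ((Fin d → ℤ) × Bool) → (Fin d → ℤ) × (Fin d → ℤ) := fun t =>
    if t.2.2 then (t.2.1, shift t.1 t.2.1) else (shift t.1 t.2.1, t.2.1) with hFdef
  have hFinj : Function.Injective F := by
    rintro ⟨i, x, b⟩ ⟨i', x', b'⟩ h
    rw [hFdef] at h
    cases b <;> cases b' <;>
      simp only [if_true, if_false, Bool.false_eq_true, Prod.mk.injEq] at h <;>
      obtain ⟨h1, h2⟩ := h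
    · -- (shift i x, x) = (shift i' x', x')
      subst h2
      have : i = i' := shift_inj_base rfl h1
      simp [this]
    · -- (shift i x, x) = (x', shift i' x')
      exact absurd (h2.trans (congrArg (shift i') h1.symm)) (no_double_shift i i' x)
    · -- (x, shift i x) = (shift i' x', x')
      exact absurd (h1.trans (congrArg (shift i') h2).symm) (no_double_shift i i' x)
    · -- (x, shift i x) = (x', shift i' x')
      subst h1
      have : i = i' := shift_inj_base rfl h2
      simp [this]
  set idx : Finset (Fin d × ((Fin d → ℤ) × Bool)) :=
    Finset.univ ×ˢ ((boxF d n) ×ˢ Finset.univ) with hidx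
  have himg : (boxF d n ×ˢ boxF d n).filter (fun p => g p ≠ 0) ⊆ idx.image F := by
    intro p hp
    rw [Finset.mem_filter] at hp
    obtain ⟨hpmem, hpne⟩ := hp
    rw [Finset.mem_product] at hpmem
    have hadj : Adj p.1 p.2 := by
      by_contra hna
      exact hpne (hgadj p hna)
    rcases adj_iff.1 hadj with ⟨i, h2 | h1⟩
    · apply Finset.mem_image.2
      refine ⟨(i, p.1, true), ?_, ?_⟩
      · rw [hidx]
        simp only [Finset.mem_product, Finset.mem_univ, true_and, and_true]
        exact hpmem.1
      · rw [hFdef]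
        simp only [if_true]
        rw [← h2]
    · apply Finset.mem_image.2
      refine ⟨(i, p.2, false), ?_, ?_⟩
      · rw [hidx]
        simp only [Finset.mem_product, Finset.mem_univ, true_and, and_true]
        exact hpmem.2
      · rw [hFdef]
        simp only [Bool.false_eq_true, if_false]
        rw [← h1]
  -- symmetry of g
  have hgsymm : ∀ u v, g (v, u) = g (u, v) := by
    intro u v
    rw [hgdef]
    dsimp only
    by_cases hadj : Adj u v
    · rw [if_pos (adj_comm.1 hadj), if_pos hadj]
      ring
    · rw [if_neg (fun hc => hadj (adj_comm.1 hc)), if_neg hadj]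
  -- main chain
  have hchain : ∑ p ∈ boxF d n ×ˢ boxF d n, g p
      ≤ ∑ i : Fin d, ∑ x ∈ boxF d n, 2 * g (x, shift i x) := by
    calc ∑ p ∈ boxF d n ×ˢ boxF d n, g p
        = ∑ p ∈ (boxF d n ×ˢ boxF d n).filter (fun p => g p ≠ 0), g p :=
          (Finset.sum_filter_ne_zero _).symm
      _ ≤ ∑ p ∈ idx.image F, g p :=
          Finset.sum_le_sum_of_subset_of_nonneg himg (fun p _ _ => hg0 p)
      _ = ∑ t ∈ idx, g (F t) :=
          Finset.sum_image (fun t _ t' _ h => hFinj h)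
      _ = ∑ i : Fin d, ∑ x ∈ boxF d n, 2 * g (x, shift i x) := by
          rw [hidx, Finset.sum_product]
          apply Finset.sum_congr rfl
          intro i _
          rw [Finset.sum_product]
          apply Finset.sum_congr rfl
          intro x _
          rw [Fintype.sum_bool]
          rw [hFdef]
          dsimp only
          rw [if_pos rfl]
          simp only [Bool.false_eq_true, if_false]
          rw [hgsymm x (shift i x)]
          ring
  -- termwise bound
  have hterm : ∀ (i : Fin d), ∀ x ∈ boxF d n, g (x, shift i x) ≤
      (if x ∈ boxF d (m-1) then 0 else c * (τω x ^ a * τω (shift i x) ^ a)) := by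
    intro i x _
    by_cases hx : x ∈ boxF d (m-1)
    · rw [if_pos hx]
      apply le_of_eq
      have hx1 : nrm x ≤ m := le_trans (mem_boxF.1 hx) (by omega)
      have hx2 : nrm (shift i x) ≤ m := le_trans (nrm_shift_le i x) (by
        have := mem_boxF.1 hx; omega)
      rw [hgdef]
      dsimp only
      rw [plat_eq_one hmn hx2, plat_eq_one hmn hx1]
      split_ifs <;> ring
    · rw [if_neg hx]
      have hY0 : 0 ≤ τω x ^ a * τω (shift i x) ^ a :=
        mul_nonneg (Real.rpow_nonneg (hτ _) _) (Real.rpow_nonneg (hτ _) _)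
      rw [hgdef]
      dsimp only
      split_ifs with hadj
      · have hlip : |plat n m (shift i x) - plat n m x| ≤ ((n:ℝ) - m)⁻¹ := by
          refine le_trans (plat_lip hmn x (shift i x)) ?_
          rw [div_le_iff₀ hden, inv_mul_cancel₀ (ne_of_gt hden)]
          have h1 := nrm_shift_le i x
          have h2 := le_nrm_shift i x
          rw [abs_le]
          constructor
          · have : (nrm x : ℝ) ≤ (nrm (shift i x) : ℝ) + 1 := by exact_mod_cast h2
            linarith
          · have : (nrm (shift i x) : ℝ) ≤ (nrm x : ℝ) + 1 := by exact_mod_cast h1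
            linarith
        have hsq : (plat n m (shift i x) - plat n m x)^2 ≤ c := by
          rw [hcdef, ← inv_pow]
          calc (plat n m (shift i x) - plat n m x)^2
              = |plat n m (shift i x) - plat n m x|^2 := (sq_abs _).symm
            _ ≤ (((n:ℝ) - m)⁻¹)^2 := by
                apply pow_le_pow_left₀ (abs_nonneg _) hlip
        calc τω x ^ a * τω (shift i x) ^ a * (plat n m (shift i x) - plat n m x)^2
            ≤ τω x ^ a * τω (shift i x) ^ a * c := by
              exact mul_le_mul_of_nonneg_left hsq hY0
          _ = c * (τω x ^ a * τω (shift i x) ^ a) := by ring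
      · exact mul_nonneg hc0 hY0
  -- assemble
  rw [hfs]
  calc (1/2) * ∑ p ∈ boxF d n ×ˢ boxF d n, g p
      ≤ (1/2) * ∑ i : Fin d, ∑ x ∈ boxF d n, 2 * g (x, shift i x) := by
        apply mul_le_mul_of_nonneg_left hchain (by norm_num)
    _ = ∑ i : Fin d, ∑ x ∈ boxF d n, g (x, shift i x) := by
        rw [Finset.mul_sum]
        apply Finset.sum_congr rfl
        intro i _
        rw [Finset.mul_sum]
        apply Finset.sum_congr rfl
        intro x _
        ring
    _ ≤ ∑ i : Fin d, ∑ x ∈ boxF d n,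
          (if x ∈ boxF d (m-1) then 0 else c * (τω x ^ a * τω (shift i x) ^ a)) := by
        apply Finset.sum_le_sum
        intro i _
        exact Finset.sum_le_sum (hterm i)
    _ = c * ∑ i : Fin d, ∑ x ∈ boxF d n \ boxF d (m-1), τω x ^ a * τω (shift i x) ^ a := by
        rw [Finset.mul_sum]
        apply Finset.sum_congr rfl
        intro i _
        rw [Finset.sdiff_eq_filter, Finset.sum_filter, Finset.mul_sum]
        apply Finset.sum_congr rfl
        intro x _
        by_cases hx : x ∈ boxF d (m-1)
        · rw [if_pos hx, if_neg (not_not_intro hx), mul_zero]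
        · rw [if_neg hx, if_pos hx]

end ERUB

namespace ERUB

lemma shift_injective {d : ℕ} (i : Fin d) : Function.Injective (shift i) := by
  intro x y h
  funext j
  have := congrFun h j
  rw [shift_apply, shift_apply] at this
  by_cases hji : j = i
  · subst hji; rw [if_pos rfl, if_pos rfl] at this; omega
  · rw [if_neg hji, if_neg hji] at this; exact this

lemma self_ne_shift {d : ℕ} (i : Fin d) (x : Fin d → ℤ) : x ≠ shift i x := by
  intro h
  have := congrFun h i
  rw [shift_apply, if_pos rfl] at this
  omega

set_option maxHeartbeats 1000000 in
lemma slln_class {d : ℕ} (a : ℝ)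
    {Ω : Type*} [MeasurableSpace Ω] (P : Measure Ω) [IsProbabilityMeasure P]
    (τ : (Fin d → ℤ) → Ω → ℝ) (hmeas : ∀ x, Measurable (τ x))
    (hindep : iIndepFun τ P)
    (hid : ∀ x, IdentDistrib (τ x) (τ 0) P P)
    (hint : Integrable (fun ω => τ 0 ω ^ a) P)
    (i₀ : Fin d) (r : ℤ) (hr : r = 0 ∨ r = 1) :
    ∀ᵐ ω ∂P, Tendsto (fun k : ℕ =>
      (∑ x ∈ (boxF d k).filter (· ∈ {x : Fin d → ℤ | x i₀ % 2 = r}),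
        (τ x ω ^ a * τ (shift i₀ x) ω ^ a))
      / ((((boxF d k).filter (· ∈ {x : Fin d → ℤ | x i₀ % 2 = r})).card : ℝ))) atTop
      (𝓝 ((∫ ω, τ 0 ω ^ a ∂P)^2)) := by
  classical
  set S : Set (Fin d → ℤ) := {x : Fin d → ℤ | x i₀ % 2 = r} with hS
  set Y : (Fin d → ℤ) → Ω → ℝ := fun x ω => τ x ω ^ a * τ (shift i₀ x) ω ^ a with hY
  have mrpow : Measurable (fun t : ℝ => t ^ a) := by measurability
  have hφm : Measurable (fun p : ℝ × ℝ => p.1 ^ a * p.2 ^ a) := by measurability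
  -- infinite class
  have hSinf : S.Infinite := by
    apply Set.infinite_of_injective_forall_mem
      (f := fun k : ℕ => (fun _ => 2 * (k : ℤ) + r : Fin d → ℤ))
    · intro k k' h
      have h2 : 2 * (k : ℤ) + r = 2 * (k' : ℤ) + r := congrFun h i₀
      omega
    · intro k
      rw [hS, Set.mem_setOf_eq]
      show (2 * (k : ℤ) + r) % 2 = r
      omega
  -- distinctness facts
  have hparity : ∀ x ∈ S, ∀ y ∈ S, x ≠ shift i₀ y := by
    intro x hx y hy hcon
    rw [hS, Set.mem_setOf_eq] at hx hy
    have := congrFun hcon i₀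
    rw [shift_apply, if_pos rfl] at this
    omega
  -- integrability of marginals
  have hτa_int : ∀ x, Integrable (fun ω => τ x ω ^ a) P := by
    intro x
    exact (IdentDistrib.integrable_iff ((hid x).comp mrpow)).2 hint
  have hτa_avg : ∀ x, ∫ ω, τ x ω ^ a ∂P = ∫ ω, τ 0 ω ^ a ∂P := by
    intro x
    exact ((hid x).comp mrpow).integral_eq
  -- per-site independence along an edge
  have hedge : ∀ x : Fin d → ℤ, IndepFun (τ x) (τ (shift i₀ x)) P :=
    fun x => hindep.indepFun (self_ne_shift i₀ x)
  -- integrability of Y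
  have hYint : ∀ x, Integrable (Y x) P := by
    intro x
    have := ((hedge x).comp mrpow mrpow).integrable_mul (hτa_int x) (hτa_int (shift i₀ x))
    exact this
  -- expectation of Y
  have hYavg : ∀ x, ∫ ω, Y x ω ∂P = (∫ ω, τ 0 ω ^ a ∂P)^2 := by
    intro x
    have h1 := ((hedge x).comp mrpow mrpow).integral_fun_mul_eq_mul_integral
      (hτa_int x).aestronglyMeasurable (hτa_int (shift i₀ x)).aestronglyMeasurable
    rw [hY]
    simp only
    calc ∫ ω, τ x ω ^ a * τ (shift i₀ x) ω ^ a ∂P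
        = (∫ ω, τ x ω ^ a ∂P) * (∫ ω, τ (shift i₀ x) ω ^ a ∂P) := h1
      _ = (∫ ω, τ 0 ω ^ a ∂P)^2 := by
          rw [hτa_avg x, hτa_avg (shift i₀ x)]
          ring
  -- identical distribution of Y within the class
  have hpair : ∀ x : Fin d → ℤ, Measure.map (fun ω => (τ x ω, τ (shift i₀ x) ω)) P
      = (Measure.map (τ 0) P).prod (Measure.map (τ 0) P) := by
    intro x
    rw [(indepFun_iff_map_prod_eq_prod_map_map (hmeas x).aemeasurable
      (hmeas (shift i₀ x)).aemeasurable).1 (hedge x), (hid x).map_eq, (hid (shift i₀ x)).map_eq]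
  have hYident : ∀ x, ∀ y, IdentDistrib (Y x) (Y y) P P := by
    intro x y
    have hpx : IdentDistrib (fun ω => (τ x ω, τ (shift i₀ x) ω))
        (fun ω => (τ y ω, τ (shift i₀ y) ω)) P P :=
      ⟨((hmeas x).prodMk (hmeas (shift i₀ x))).aemeasurable,
       ((hmeas y).prodMk (hmeas (shift i₀ y))).aemeasurable,
       by rw [hpair x, hpair y]⟩
    exact hpx.comp hφm
  -- independence of Y within the class
  have hYindep : ∀ x ∈ S, ∀ y ∈ S, x ≠ y → IndepFun (Y x) (Y y) P := by
    intro x hx y hy hne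
    have h4 : shift i₀ x ≠ shift i₀ y := fun h => hne (shift_injective i₀ h)
    have hpairind := hindep.indepFun_prodMk_prodMk hmeas x (shift i₀ x) y (shift i₀ y)
      hne (hparity x hx y hy) (fun h => hparity y hy x hx h.symm) h4
    exact hpairind.comp hφm hφm
  exact slln_over_boxes P Y S hSinf _ (fun x _ => hYint x) (fun x _ => hYavg x)
    (fun x _ y _ => hYident x y) hYindep

end ERUB

namespace ERUB

variable {d : ℕ}

lemma dirForm_nonneg (a : ℝ) (τω f : (Fin d → ℤ) → ℝ) (hτ : ∀ x, 0 ≤ τω x) :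
    0 ≤ dirForm a τω f := by
  rw [dirForm]
  apply mul_nonneg (by norm_num)
  apply finsum_nonneg
  intro p
  split_ifs
  · exact mul_nonneg (mul_nonneg (Real.rpow_nonneg (hτ _) _) (Real.rpow_nonneg (hτ _) _))
      (sq_nonneg _)
  · exact le_rfl

lemma den_eq_sum (n m : ℕ) (hmn : m < n) (τω : (Fin d → ℤ) → ℝ) :
    ∑ᶠ x, (plat n m x)^2 * τω x = ∑ x ∈ boxF d n, (plat n m x)^2 * τω x := by
  apply finsum_eq_sum_of_support_subset
  intro x hx
  rw [Function.mem_support] at hx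
  rw [Finset.mem_coe, mem_boxF]
  by_contra hc
  apply hx
  rw [plat_eq_zero hmn (by omega)]
  ring

lemma den_ge (n m : ℕ) (hmn : m < n) (τω : (Fin d → ℤ) → ℝ) (hτ : ∀ x, 1 ≤ τω x) :
    ∑ x ∈ boxF d m, τω x ≤ ∑ᶠ x, (plat n m x)^2 * τω x := by
  rw [den_eq_sum n m hmn]
  calc ∑ x ∈ boxF d m, τω x = ∑ x ∈ boxF d m, (plat n m x)^2 * τω x := by
        apply Finset.sum_congr rfl
        intro x hx
        rw [plat_eq_one hmn (mem_boxF.1 hx)]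
        ring
    _ ≤ ∑ x ∈ boxF d n, (plat n m x)^2 * τω x := by
        apply Finset.sum_le_sum_of_subset_of_nonneg (boxF_mono (le_of_lt hmn))
        intro x _ _
        exact mul_nonneg (sq_nonneg _) (le_trans zero_le_one (hτ x))

lemma eig_le_plat (a : ℝ) (τω : (Fin d → ℤ) → ℝ) (hτ : ∀ x, 1 ≤ τω x)
    (n m : ℕ) (hmn : m < n) :
    eig d a τω n ≤ dirForm a τω (plat n m) / ∑ᶠ x, (plat n m x)^2 * τω x := by
  apply csInf_le
  · refine ⟨0, ?_⟩
    rintro r ⟨f, _hv, _hne, rfl⟩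
    apply div_nonneg (dirForm_nonneg a τω f (fun x => le_trans zero_le_one (hτ x)))
    apply finsum_nonneg
    intro x
    exact mul_nonneg (sq_nonneg _) (le_trans zero_le_one (hτ x))
  · refine ⟨plat n m, ?_, ?_, rfl⟩
    · intro x hx
      have h2 : ¬ nrm x ≤ n := fun h => hx (mem_boxS.2 h)
      exact plat_eq_zero hmn (by omega)
    · intro h0
      have h1 : plat n m (fun _ => (0:ℤ) : Fin d → ℤ) = 1 := by
        apply plat_eq_one hmn
        apply nrm_le_iff'.2
        intro i
        simp
      have h2 := congrFun h0 (fun _ => (0:ℤ) : Fin d → ℤ)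
      rw [h1] at h2
      simp at h2

end ERUB

namespace ERUB

lemma const_ineq (d : ℕ) (hd : 1 ≤ d) :
    4*((2:ℝ)^d - 1) ≤ (2:ℝ)^((3*(d:ℝ))/2 - 2) * Real.pi^2 := by
  have h2 : (0:ℝ) < 2 := two_pos
  have hs : (2:ℝ)^((3*(d:ℝ))/2 - 2) = ((2:ℝ)^((3:ℝ)/2))^d / 4 := by
    rw [Real.rpow_sub h2]
    congr 1
    · rw [show (3*(d:ℝ))/2 = ((3:ℝ)/2) * d by ring, Real.rpow_mul (le_of_lt h2),
        Real.rpow_natCast]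
    · have h22 : (2:ℝ)^(2:ℝ) = (2:ℝ)^((2:ℕ):ℝ) := by norm_num
      rw [h22, Real.rpow_natCast]
      norm_num
  have hsval : (2:ℝ)^((3:ℝ)/2) = 2 * Real.sqrt 2 := by
    rw [show (3:ℝ)/2 = 1 + 1/2 by norm_num, Real.rpow_add h2, Real.rpow_one,
      Real.sqrt_eq_rpow]
  set s : ℝ := Real.sqrt 2 with hsdef
  have hs1 : (1:ℝ) ≤ s := by
    rw [hsdef, show (1:ℝ) = Real.sqrt 1 from by simp]
    exact Real.sqrt_le_sqrt (by norm_num)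
  have hs2 : s^2 = 2 := Real.sq_sqrt (by norm_num)
  have hpi : (9:ℝ) ≤ Real.pi^2 := by
    have := Real.pi_gt_three
    nlinarith
  have hkey : 16*((2:ℝ)^d - 1) ≤ (2*s)^d * Real.pi^2 := by
    rw [mul_pow]
    rcases Nat.lt_or_ge d 2 with hd2 | hd2
    · have hd1 : d = 1 := by omega
      subst hd1
      simp only [pow_one]
      nlinarith
    · have hsd : (2:ℝ) ≤ s^d := by
        rw [← hs2]
        exact pow_le_pow_right₀ hs1 hd2
      have hp0 : (0:ℝ) < (2:ℝ)^d := pow_pos h2 d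
      have t1 : (2:ℝ)^d * 2 ≤ (2:ℝ)^d * s^d := by nlinarith
      have t2 : ((2:ℝ)^d * s^d) * 9 ≤ ((2:ℝ)^d * s^d) * Real.pi^2 := by nlinarith
      nlinarith
  rw [hs, hsval]
  linarith

lemma tendsto_v1 : Tendsto (fun n : ℕ => ((2*n+1:ℕ):ℝ)/(n:ℝ)) atTop (𝓝 2) := by
  have hbase : Tendsto (fun n : ℕ => 2 + ((n:ℝ))⁻¹) atTop (𝓝 2) := by
    have h1 : Tendsto (fun n : ℕ => ((n:ℝ))⁻¹) atTop (𝓝 0) :=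
      (tendsto_natCast_atTop_atTop (R := ℝ)).inv_tendsto_atTop
    have := (tendsto_const_nhds (x := (2:ℝ)) (f := atTop (α := ℕ))).add h1
    simpa using this
  apply Tendsto.congr' _ hbase
  filter_upwards [eventually_ge_atTop 1] with n hn
  have hn0 : (n:ℝ) ≠ 0 := Nat.cast_ne_zero.2 (by omega)
  push_cast
  field_simp

lemma tendsto_v2 : Tendsto (fun n : ℕ => ((2*(n/2-1)+1:ℕ):ℝ)/(n:ℝ)) atTop (𝓝 1) := by
  have hlow : Tendsto (fun n : ℕ => 1 - 3*((n:ℝ))⁻¹) atTop (𝓝 1) := by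
    have h1 : Tendsto (fun n : ℕ => ((n:ℝ))⁻¹) atTop (𝓝 0) :=
      (tendsto_natCast_atTop_atTop (R := ℝ)).inv_tendsto_atTop
    have := (tendsto_const_nhds (x := (1:ℝ)) (f := atTop (α := ℕ))).sub (h1.const_mul 3)
    simpa using this
  apply tendsto_of_tendsto_of_tendsto_of_le_of_le' hlow tendsto_const_nhds
  · filter_upwards [eventually_ge_atTop 6] with n hn
    have hn0 : (0:ℝ) < (n:ℝ) := by
      have : 0 < n := by omega
      exact_mod_cast this
    have hk : (n:ℝ) ≤ ((2*(n/2-1)+1:ℕ):ℝ) + 3 := by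
      have : n ≤ 2*(n/2-1)+1 + 3 := by omega
      exact_mod_cast this
    have h1 : 1 - 3*((n:ℝ))⁻¹ = ((n:ℝ) - 3)/(n:ℝ) := by field_simp
    rw [h1]
    gcongr
    linarith
  · filter_upwards [eventually_ge_atTop 6] with n hn
    have hn0 : (0:ℝ) < (n:ℝ) := by
      have : 0 < n := by omega
      exact_mod_cast this
    rw [div_le_one hn0]
    have : 2*(n/2-1)+1 ≤ n := by omega
    exact_mod_cast this

lemma tendsto_v3 : Tendsto (fun n : ℕ => (n:ℝ)/((n:ℝ) - ((n/2:ℕ):ℝ))) atTop (𝓝 2) := by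
  have hlow : Tendsto (fun n : ℕ => 2 - 2*(((n:ℝ)+1))⁻¹) atTop (𝓝 2) := by
    have h0 : Tendsto (fun n : ℕ => (n:ℝ)+1) atTop atTop :=
      tendsto_atTop_add_const_right atTop 1 (tendsto_natCast_atTop_atTop (R := ℝ))
    have h1 : Tendsto (fun n : ℕ => ((n:ℝ)+1)⁻¹) atTop (𝓝 0) := h0.inv_tendsto_atTop
    have := (tendsto_const_nhds (x := (2:ℝ)) (f := atTop (α := ℕ))).sub (h1.const_mul 2)
    simpa using this
  apply tendsto_of_tendsto_of_tendsto_of_le_of_le' hlow tendsto_const_nhds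
  · filter_upwards [eventually_ge_atTop 2] with n hn
    have hq : ((n:ℝ) - ((n/2:ℕ):ℝ)) = ((n - n/2:ℕ):ℝ) := by
      have : n/2 ≤ n := Nat.div_le_self n 2
      push_cast [this]
      ring
    set q : ℕ := n - n/2 with hqdef
    have hq1 : 1 ≤ q := by omega
    have hq2 : 2*q ≤ n + 1 := by omega
    have hn0 : (0:ℝ) < (n:ℝ) := by
      have : 0 < n := by omega
      exact_mod_cast this
    have hq0 : (0:ℝ) < (q:ℝ) := by
      exact_mod_cast hq1
    rw [hq]
    have h1 : 2 - 2*(((n:ℝ)+1))⁻¹ = 2*(n:ℝ)/((n:ℝ)+1) := by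
      field_simp
      ring
    rw [h1, div_le_div_iff₀ (by positivity) hq0]
    have hq2' : 2*(q:ℝ) ≤ (n:ℝ) + 1 := by exact_mod_cast hq2
    nlinarith
  · filter_upwards [eventually_ge_atTop 2] with n hn
    have hq : ((n:ℝ) - ((n/2:ℕ):ℝ)) = ((n - n/2:ℕ):ℝ) := by
      have : n/2 ≤ n := Nat.div_le_self n 2
      push_cast [this]
      ring
    set q : ℕ := n - n/2 with hqdef
    have hq1 : 1 ≤ q := by omega
    have hq3 : n ≤ 2*q := by omega
    have hq0 : (0:ℝ) < (q:ℝ) := by exact_mod_cast hq1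
    rw [hq, div_le_iff₀ hq0]
    have : (n:ℝ) ≤ 2*(q:ℝ) := by exact_mod_cast hq3
    linarith

end ERUB


open ERUB in
set_option maxHeartbeats 2000000 in
/-- if `E[τ_0^a] < ∞`, then for any
`C > 2^{3d/2-2} d π² E[τ_0^a]²`, almost surely, for all `n` large enough,
`λ_n ≤ (C/n²) · n^d / ∑_{x ∈ B_{n/2}} τ_x`. -/
theorem eig_regular_upper_bound (d : ℕ) (hd : 1 ≤ d)
    (a : ℝ) (ha : a ∈ Set.Icc (0:ℝ) 1)
    {Ω : Type*} [MeasurableSpace Ω] (P : Measure Ω) [IsProbabilityMeasure P]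
    (τ : (Fin d → ℤ) → Ω → ℝ) (hmeas : ∀ x, Measurable (τ x))
    (hpos : ∀ x ω, 1 ≤ τ x ω)
    (hindep : iIndepFun τ P)
    (hid : ∀ x, IdentDistrib (τ x) (τ 0) P P)
    (hint : Integrable (fun ω => τ 0 ω ^ a) P)
    (C : ℝ)
    (hC : (2:ℝ) ^ ((3*(d:ℝ))/2 - 2) * d * Real.pi^2 * (∫ ω, τ 0 ω ^ a ∂P)^2 < C) :
    ∀ᵐ ω ∂P, ∀ᶠ n : ℕ in atTop,
      eig d a (fun x => τ x ω) n
        ≤ C / (n:ℝ)^2 * ((n:ℝ)^d / ∑ x ∈ boxF d (n/2), τ x ω) := by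
  classical
  set E : ℝ := ∫ ω, τ 0 ω ^ a ∂P with hEdef
  have hE1 : (1:ℝ) ≤ E := by
    rw [hEdef]
    calc (1:ℝ) = ∫ _ω, (1:ℝ) ∂P := by simp
      _ ≤ ∫ ω, τ 0 ω ^ a ∂P := by
          apply integral_mono (integrable_const 1) hint
          intro ω
          calc (1:ℝ) = (1:ℝ) ^ a := (Real.one_rpow a).symm
            _ ≤ τ 0 ω ^ a := Real.rpow_le_rpow (by norm_num) (hpos 0 ω) ha.1
  have hE2 : (1:ℝ) ≤ E^2 := by nlinarith
  -- the constant bound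
  set L0 : ℝ := 4*(d:ℝ)*((2:ℝ)^d - 1)*E^2 with hL0def
  have hL0C : L0 < C := by
    have h1 : 4*((2:ℝ)^d - 1) * ((d:ℝ) * E^2)
        ≤ ((2:ℝ)^((3*(d:ℝ))/2 - 2) * Real.pi^2) * ((d:ℝ) * E^2) :=
      mul_le_mul_of_nonneg_right (const_ineq d hd) (by positivity)
    have h2 : L0 = 4*((2:ℝ)^d - 1) * ((d:ℝ) * E^2) := by rw [hL0def]; ring
    have h3 : ((2:ℝ)^((3*(d:ℝ))/2 - 2) * Real.pi^2) * ((d:ℝ) * E^2)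
        = (2:ℝ)^((3*(d:ℝ))/2 - 2) * d * Real.pi^2 * E^2 := by ring
    rw [h2]
    rw [h3] at h1
    exact lt_of_le_of_lt h1 hC
  -- choice of epsilon
  set ε : ℝ := (C - L0)/(4*(d:ℝ)*((2:ℝ)^d+1)+1) with hεdef
  have hd0 : (0:ℝ) < (d:ℝ) := by exact_mod_cast hd
  have hεpos : 0 < ε := by
    rw [hεdef]
    apply div_pos (by linarith)
    positivity
  have hεeq : ε * (4*(d:ℝ)*((2:ℝ)^d+1)+1) = C - L0 := by
    rw [hεdef]
    field_simp
  have hLεC : 4*(d:ℝ)*((E^2+ε)*(2:ℝ)^d - (E^2-ε)) < C := by nlinarith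
  -- the classes
  set Scls : Fin d → Bool → Set (Fin d → ℤ) :=
    fun i b => {x : Fin d → ℤ | x i % 2 = (cond b 1 0 : ℤ)} with hSclsdef
  -- almost sure convergence for all classes
  have hAE : ∀ᵐ ω ∂P, ∀ pr : Fin d × Bool,
      Tendsto (fun k : ℕ =>
        (∑ x ∈ (boxF d k).filter (· ∈ Scls pr.1 pr.2),
          (τ x ω ^ a * τ (shift pr.1 x) ω ^ a))
        / ((((boxF d k).filter (· ∈ Scls pr.1 pr.2)).card : ℝ))) atTop
        (𝓝 (E^2)) := by
    rw [ae_all_iff]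
    rintro ⟨i, b⟩
    exact slln_class a P τ hmeas hindep hid hint i (cond b 1 0)
      (by cases b <;> simp)
  filter_upwards [hAE] with ω hω
  -- eventual bounds per class
  have hbound : ∀ pr : Fin d × Bool, ∀ᶠ k : ℕ in atTop,
      (∑ x ∈ (boxF d k).filter (· ∈ Scls pr.1 pr.2),
          (τ x ω ^ a * τ (shift pr.1 x) ω ^ a))
        ≤ (E^2+ε) * (((boxF d k).filter (· ∈ Scls pr.1 pr.2)).card : ℝ)
      ∧ (E^2-ε) * (((boxF d k).filter (· ∈ Scls pr.1 pr.2)).card : ℝ)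
        ≤ (∑ x ∈ (boxF d k).filter (· ∈ Scls pr.1 pr.2),
          (τ x ω ^ a * τ (shift pr.1 x) ω ^ a)) := by
    rintro ⟨i, b⟩
    have h1 : ∀ᶠ k : ℕ in atTop, (∑ x ∈ (boxF d k).filter (· ∈ Scls i b),
        (τ x ω ^ a * τ (shift i x) ω ^ a))
        / ((((boxF d k).filter (· ∈ Scls i b)).card : ℝ)) < E^2 + ε :=
      (hω (i, b)).eventually_lt_const (by linarith)
    have h2 : ∀ᶠ k : ℕ in atTop, E^2 - ε < (∑ x ∈ (boxF d k).filter (· ∈ Scls i b),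
        (τ x ω ^ a * τ (shift i x) ω ^ a))
        / ((((boxF d k).filter (· ∈ Scls i b)).card : ℝ)) :=
      (hω (i, b)).eventually_const_lt (by linarith)
    filter_upwards [h1, h2, eventually_ge_atTop 1] with k hk1 hk2 hk
    have hmem : (fun _ => (cond b 1 0 : ℤ) : Fin d → ℤ) ∈ (boxF d k).filter (· ∈ Scls i b) := by
      rw [Finset.mem_filter]
      constructor
      · rw [mem_boxF]
        apply le_trans _ hk
        apply nrm_le_iff'.2
        intro j
        cases b <;> simp
      · rw [hSclsdef]
        cases b <;> simp
    have hcpos : (0:ℝ) < (((boxF d k).filter (· ∈ Scls i b)).card : ℝ) := by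
      have : 0 < ((boxF d k).filter (· ∈ Scls i b)).card := Finset.card_pos.2 ⟨_, hmem⟩
      exact_mod_cast this
    constructor
    · exact le_of_lt ((div_lt_iff₀ hcpos).1 hk1)
    · exact le_of_lt ((lt_div_iff₀ hcpos).1 hk2)
  -- assemble eventual statements
  have hev1 : ∀ᶠ n : ℕ in atTop, ∀ pr : Fin d × Bool,
      (∑ x ∈ (boxF d n).filter (· ∈ Scls pr.1 pr.2),
          (τ x ω ^ a * τ (shift pr.1 x) ω ^ a))
        ≤ (E^2+ε) * (((boxF d n).filter (· ∈ Scls pr.1 pr.2)).card : ℝ) :=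
    eventually_all.2 (fun pr => (hbound pr).mono (fun k hk => hk.1))
  have htend2 : Tendsto (fun n : ℕ => n/2 - 1) atTop atTop :=
    tendsto_atTop_atTop.2 (fun b => ⟨2*b+2, fun n hn => by omega⟩)
  have hev2 : ∀ᶠ n : ℕ in atTop, ∀ pr : Fin d × Bool,
      (E^2-ε) * (((boxF d (n/2-1)).filter (· ∈ Scls pr.1 pr.2)).card : ℝ)
        ≤ (∑ x ∈ (boxF d (n/2-1)).filter (· ∈ Scls pr.1 pr.2),
          (τ x ω ^ a * τ (shift pr.1 x) ω ^ a)) :=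
    eventually_all.2 (fun pr => htend2.eventually ((hbound pr).mono (fun k hk => hk.2)))
  -- the deterministic ratio sequence
  set G : ℕ → ℝ := fun n =>
    ((n:ℝ)/((n:ℝ) - ((n/2:ℕ):ℝ)))^2 *
      ((d:ℝ) * ((E^2+ε) * (((2*n+1:ℕ):ℝ)/(n:ℝ))^d
        - (E^2-ε) * (((2*(n/2-1)+1:ℕ):ℝ)/(n:ℝ))^d)) with hGdef
  have hGt : Tendsto G atTop
      (𝓝 ((2:ℝ)^2 * ((d:ℝ) * ((E^2+ε) * (2:ℝ)^d - (E^2-ε) * (1:ℝ)^d)))) := by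
    apply Tendsto.mul
    · exact tendsto_v3.pow 2
    · apply Tendsto.const_mul
      exact ((tendsto_v1.pow d).const_mul _).sub ((tendsto_v2.pow d).const_mul _)
  have hlim_lt : (2:ℝ)^2 * ((d:ℝ) * ((E^2+ε) * (2:ℝ)^d - (E^2-ε) * (1:ℝ)^d)) < C := by
    have : (2:ℝ)^2 * ((d:ℝ) * ((E^2+ε) * (2:ℝ)^d - (E^2-ε) * (1:ℝ)^d))
        = 4*(d:ℝ)*((E^2+ε)*(2:ℝ)^d - (E^2-ε)) := by norm_num; ring
    rw [this]
    exact hLεC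
  have hevG : ∀ᶠ n : ℕ in atTop, G n < C := hGt.eventually_lt_const hlim_lt
  -- final eventual claim
  filter_upwards [hev1, hev2, hevG, eventually_ge_atTop 6] with n hn1 hn2 hnG hn6
  set m : ℕ := n/2 with hmdef
  have hm1 : 1 ≤ m := by omega
  have hmn : m < n := by omega
  have hn0 : (0:ℝ) < (n:ℝ) := by
    have : 0 < n := by omega
    exact_mod_cast this
  have hnm0 : (0:ℝ) < (n:ℝ) - (m:ℝ) := by
    have : (m:ℝ) < (n:ℝ) := by exact_mod_cast hmn
    linarith
  have hτ1 : ∀ x : Fin d → ℤ, (1:ℝ) ≤ τ x ω := fun x => hpos x ω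
  have hτ0 : ∀ x : Fin d → ℤ, (0:ℝ) ≤ τ x ω := fun x => le_trans zero_le_one (hτ1 x)
  -- positivity of the box sum
  have hmem0 : (fun _ => (0:ℤ) : Fin d → ℤ) ∈ boxF d m := by
    rw [mem_boxF]
    apply le_trans (nrm_le_iff'.2 (fun i => by simp)) (Nat.zero_le m)
  have hS1 : (1:ℝ) ≤ ∑ x ∈ boxF d m, τ x ω := by
    have hcard : 0 < (boxF d m).card := Finset.card_pos.2 ⟨_, hmem0⟩
    calc (1:ℝ) ≤ ((boxF d m).card : ℝ) := by exact_mod_cast hcard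
      _ = ∑ _x ∈ boxF d m, (1:ℝ) := by rw [Finset.sum_const]; simp
      _ ≤ ∑ x ∈ boxF d m, τ x ω := Finset.sum_le_sum (fun x _ => hτ1 x)
  have hS0 : (0:ℝ) < ∑ x ∈ boxF d m, τ x ω := lt_of_lt_of_le zero_lt_one hS1
  -- the Dirichlet form bound
  have hdfb := dirForm_le_sum n m hm1 hmn a (fun x => τ x ω) hτ0
  -- split into parity classes and bound
  set K1 : ℝ := (((2*n+1)^d : ℕ) : ℝ) with hK1def
  set K2 : ℝ := (((2*(m-1)+1)^d : ℕ) : ℝ) with hK2def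
  have hfiltereq : ∀ i : Fin d, ∀ k : ℕ,
      (boxF d k).filter (fun x => ¬ (x ∈ Scls i true)) = (boxF d k).filter (· ∈ Scls i false) := by
    intro i k
    apply Finset.filter_congr
    intro x _
    rw [hSclsdef]
    simp only [Set.mem_setOf_eq, Bool.cond_true, Bool.cond_false]
    omega
  have hsplit : ∀ i : Fin d,
      ∑ x ∈ boxF d n \ boxF d (m-1), τ x ω ^ a * τ (shift i x) ω ^ a
      ≤ (E^2+ε) * K1 - (E^2-ε) * K2 := by
    intro i
    have hsub : boxF d (m-1) ⊆ boxF d n := boxF_mono (by omega)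
    rw [Finset.sum_sdiff_eq_sub hsub]
    have hks : ∀ k : ℕ, ∑ x ∈ boxF d k, τ x ω ^ a * τ (shift i x) ω ^ a
        = (∑ x ∈ (boxF d k).filter (· ∈ Scls i true), τ x ω ^ a * τ (shift i x) ω ^ a)
        + (∑ x ∈ (boxF d k).filter (· ∈ Scls i false), τ x ω ^ a * τ (shift i x) ω ^ a) := by
      intro k
      rw [← Finset.sum_filter_add_sum_filter_not (boxF d k) (· ∈ Scls i true)
        (fun x => τ x ω ^ a * τ (shift i x) ω ^ a)]
      congr 1
      rw [hfiltereq i k]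
    have hkc : ∀ k : ℕ, (((2*k+1)^d : ℕ) : ℝ)
        = ((((boxF d k).filter (· ∈ Scls i true)).card : ℝ))
        + ((((boxF d k).filter (· ∈ Scls i false)).card : ℝ)) := by
      intro k
      have h1 := Finset.card_filter_add_card_filter_not
        (s := boxF d k) (p := (· ∈ Scls i true))
      rw [hfiltereq i k, card_boxF] at h1
      exact_mod_cast h1.symm
    have hub1 := hn1 (i, true)
    have hub2 := hn1 (i, false)
    have hlb1 := hn2 (i, true)
    have hlb2 := hn2 (i, false)
    simp only at hub1 hub2 hlb1 hlb2
    have hmeq : n/2 - 1 = m - 1 := by omega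
    rw [hmeq] at hlb1 hlb2
    rw [hks n, hks (m-1), hK1def, hK2def, hkc n, hkc (m-1)]
    have := add_le_add hub1 hub2
    have := add_le_add hlb1 hlb2
    linarith
  have htotal : ∑ i : Fin d, ∑ x ∈ boxF d n \ boxF d (m-1), τ x ω ^ a * τ (shift i x) ω ^ a
      ≤ (d:ℝ) * ((E^2+ε) * K1 - (E^2-ε) * K2) := by
    calc ∑ i : Fin d, ∑ x ∈ boxF d n \ boxF d (m-1), τ x ω ^ a * τ (shift i x) ω ^ a
        ≤ ∑ _i : Fin d, ((E^2+ε) * K1 - (E^2-ε) * K2) :=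
          Finset.sum_le_sum (fun i _ => hsplit i)
      _ = (d:ℝ) * ((E^2+ε) * K1 - (E^2-ε) * K2) := by
          rw [Finset.sum_const, Finset.card_univ, Fintype.card_fin, nsmul_eq_mul]
  have hQ : dirForm a (fun x => τ x ω) (plat n m)
      ≤ (((n:ℝ) - m)^2)⁻¹ * ((d:ℝ) * ((E^2+ε) * K1 - (E^2-ε) * K2)) :=
    le_trans hdfb (mul_le_mul_of_nonneg_left htotal (by positivity))
  -- relate to G n
  have hGn_eq : (((n:ℝ) - m)^2)⁻¹ * ((d:ℝ) * ((E^2+ε) * K1 - (E^2-ε) * K2))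
      = G n * ((n:ℝ)^d/(n:ℝ)^2) := by
    rw [hGdef]
    simp only
    rw [← hmdef]
    rw [hK1def, hK2def]
    push_cast
    rw [div_pow, div_pow, div_pow]
    have hne1 : (n:ℝ) ≠ 0 := ne_of_gt hn0
    have hne2 : (n:ℝ) - (m:ℝ) ≠ 0 := ne_of_gt hnm0
    field_simp
  have hnum : dirForm a (fun x => τ x ω) (plat n m) ≤ C * ((n:ℝ)^d/(n:ℝ)^2) := by
    rw [hGn_eq] at hQ
    calc dirForm a (fun x => τ x ω) (plat n m) ≤ G n * ((n:ℝ)^d/(n:ℝ)^2) := hQ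
      _ ≤ C * ((n:ℝ)^d/(n:ℝ)^2) :=
          mul_le_mul_of_nonneg_right (le_of_lt hnG) (by positivity)
  -- conclude
  have hden := den_ge n m hmn (fun x => τ x ω) hτ1
  have hdf0 : 0 ≤ dirForm a (fun x => τ x ω) (plat n m) := dirForm_nonneg a _ _ hτ0
  calc eig d a (fun x => τ x ω) n
      ≤ dirForm a (fun x => τ x ω) (plat n m)
          / ∑ᶠ x, (plat n m x)^2 * τ x ω := eig_le_plat a (fun x => τ x ω) hτ1 n m hmn
    _ ≤ dirForm a (fun x => τ x ω) (plat n m) / ∑ x ∈ boxF d m, τ x ω := by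
        apply div_le_div_of_nonneg_left hdf0 hS0 hden
    _ ≤ (C * ((n:ℝ)^d/(n:ℝ)^2)) / ∑ x ∈ boxF d m, τ x ω := by
        gcongr
    _ = C / (n:ℝ)^2 * ((n:ℝ)^d / ∑ x ∈ boxF d m, τ x ω) := by
        field_simp
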